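/- Let V ∈ ℂ^{M×M} be Hermitian positive definite, W an invertible M×M matrix with k-th row w_kᴴ, and fix all rows of W except row k. The function w ↦ wᴴ V w − 2 log|det W(w)| (where W(w) replaces row k by wᴴ) is minimized over w ∈ ℂ^M by w = γ (Ŵ V)⁻¹ e_k with normalization γ = (e_kᴴ (Ŵ V)⁻¹ᴴ V (Ŵ V)⁻¹ e_k)^{−1/2}, where Ŵ is any invertible matrix agreeing with W(w) on the rows other than k; equivalently the minimizer satisfies wᴴ V w = 1 and w_{k'}ᴴ V w = 0 for all k' ≠ k. -/

import Mathlib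

open Matrix ComplexOrder

/-- Determinant after replacing a row is a linear function of the new row. -/
lemma det_updateRow_dot {M : ℕ} (A : Matrix (Fin M) (Fin M) ℂ) (k : Fin M) (u : Fin M → ℂ) :
    (A.updateRow k u).det = ∑ j, u j * (A.updateRow k (Pi.single j 1)).det := by
  have hu : u = ∑ j, u j • (Pi.single j 1 : Fin M → ℂ) := by
    ext i
    simp [Pi.single_apply]
  conv_lhs => rw [hu]
  have hsum : (A.updateRow k (∑ j, u j • (Pi.single j 1 : Fin M → ℂ))).det
      = ∑ j, (A.updateRow k (u j • (Pi.single j 1 : Fin M → ℂ))).det := by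
    have := (Matrix.detRowAlternating : (Fin M → ℂ) [⋀^Fin M]→ₗ[ℂ] ℂ).toMultilinearMap.map_update_sum
      (Finset.univ : Finset (Fin M)) k (fun j => u j • (Pi.single j 1 : Fin M → ℂ)) A
    exact this
  rw [hsum]
  refine Finset.sum_congr rfl fun j _ => ?_
  rw [Matrix.det_updateRow_smul]

theorem auxiva_ip_update {M : ℕ}
    (V : Matrix (Fin M) (Fin M) ℂ) (hV : V.PosDef)
    (What : Matrix (Fin M) (Fin M) ℂ) (hWhat : IsUnit What)
    (k : Fin M) :
    let x : Fin M → ℂ := (What * V)⁻¹.mulVec (Pi.single k 1)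
    let γ : ℝ := (Real.sqrt ((star x ⬝ᵥ V.mulVec x).re))⁻¹
    let w : Fin M → ℂ := (γ : ℂ) • x
    let F : (Fin M → ℂ) → ℝ := fun v =>
      (star v ⬝ᵥ V.mulVec v).re
        - 2 * Real.log ‖(What.updateRow k (star v)).det‖
    (star w ⬝ᵥ V.mulVec w = 1) ∧
    (∀ k' ≠ k, What k' ⬝ᵥ V.mulVec w = 0) ∧
    (∀ v : Fin M → ℂ, IsUnit (What.updateRow k (star v)) → F w ≤ F v) := by
  intro x γ w F
  have hVu : IsUnit V := hV.isUnit
  have hAu : IsUnit (What * V) := hWhat.mul hVu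
  have hAdet : IsUnit (What * V).det := (Matrix.isUnit_iff_isUnit_det _).mp hAu
  -- (What * V) *ᵥ x = e_k
  have hxe : (What * V).mulVec x = Pi.single k 1 := by
    show (What * V).mulVec ((What * V)⁻¹.mulVec (Pi.single k 1)) = _
    rw [Matrix.mulVec_mulVec, Matrix.mul_nonsing_inv _ hAdet, Matrix.one_mulVec]
  set y : Fin M → ℂ := V.mulVec x with hy
  have hWy : What.mulVec y = Pi.single k 1 := by
    rw [hy, Matrix.mulVec_mulVec]; exact hxe
  -- x ≠ 0
  have hx0 : x ≠ 0 := by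
    intro h
    have : (Pi.single k 1 : Fin M → ℂ) = 0 := by
      rw [← hxe, h, Matrix.mulVec_zero]
    have := congrFun this k
    simp at this
  -- positivity of xᴴ V x
  have hc0 : (0 : ℂ) < star x ⬝ᵥ V.mulVec x := hV.dotProduct_mulVec_pos hx0
  set c0 : ℝ := (star x ⬝ᵥ V.mulVec x).re with hc0def
  have hc0pos : 0 < c0 := (Complex.lt_def.mp hc0).1
  have hc0eq : star x ⬝ᵥ V.mulVec x = (c0 : ℂ) := by
    apply Complex.ext
    · simp [hc0def]
    · simpa using (Complex.lt_def.mp hc0).2.symm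
  have hγ : γ = (Real.sqrt c0)⁻¹ := rfl
  have hγpos : 0 < γ := by
    rw [hγ]; exact inv_pos.mpr (Real.sqrt_pos.mpr hc0pos)
  have hγsq : γ * (γ * c0) = 1 := by
    rw [hγ, ← mul_assoc, ← mul_inv]
    rw [Real.mul_self_sqrt hc0pos.le]
    exact inv_mul_cancel₀ hc0pos.ne'
  -- Part 1
  have part1 : star w ⬝ᵥ V.mulVec w = 1 := by
    show star ((γ : ℂ) • x) ⬝ᵥ V.mulVec ((γ : ℂ) • x) = 1
    rw [Matrix.mulVec_smul, star_smul, smul_dotProduct, dotProduct_smul, hc0eq]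
    have hstarγ : star (γ : ℂ) = (γ : ℂ) := by simp [Complex.star_def, Complex.conj_ofReal]
    rw [hstarγ, smul_eq_mul, smul_eq_mul]
    have : (γ : ℂ) * ((γ : ℂ) * (c0 : ℂ)) = ((γ * (γ * c0) : ℝ) : ℂ) := by push_cast; ring
    rw [this, hγsq, Complex.ofReal_one]
  refine ⟨part1, ?_, ?_⟩
  · -- Part 2
    intro k' hk'
    show What k' ⬝ᵥ V.mulVec ((γ : ℂ) • x) = 0
    rw [Matrix.mulVec_smul, dotProduct_smul]
    have : What k' ⬝ᵥ V.mulVec x = What.mulVec y k' := rfl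
    rw [this, hWy]
    simp [Pi.single_apply, hk']
  · -- Part 3
    intro v hv
    set δ : ℂ := What.det with hδdef
    have hδ0 : δ ≠ 0 := ((Matrix.isUnit_iff_isUnit_det _).mp hWhat).ne_zero
    -- cofactor vector
    set c : Fin M → ℂ := fun j => (What.updateRow k (Pi.single j 1)).det with hcdef
    have key1 : ∀ u : Fin M → ℂ, (What.updateRow k u).det = ∑ j, u j * c j :=
      fun u => det_updateRow_dot What k u
    have key2 : What.mulVec c = δ • (Pi.single k 1 : Fin M → ℂ) := by
      ext i
      have h : What.mulVec c i = ∑ j, What i j * c j := rfl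
      rw [h, ← key1 (What i)]
      by_cases hik : i = k
      · subst hik
        rw [Matrix.updateRow_eq_self]
        simp [hδdef]
      · rw [Matrix.det_updateRow_eq_zero hik]
        simp [Pi.single_apply, hik]
    have hWdet : IsUnit What.det := (Matrix.isUnit_iff_isUnit_det _).mp hWhat
    have hcy : c = δ • y := by
      have h1 : What⁻¹.mulVec (What.mulVec c) = c := by
        rw [Matrix.mulVec_mulVec, Matrix.nonsing_inv_mul _ hWdet, Matrix.one_mulVec]
      have h2 : What⁻¹.mulVec (What.mulVec (δ • y)) = δ • y := by
        rw [Matrix.mulVec_mulVec, Matrix.nonsing_inv_mul _ hWdet, Matrix.one_mulVec]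
      have h3 : What.mulVec (δ • y) = What.mulVec c := by
        rw [Matrix.mulVec_smul, hWy, key2]
      rw [← h1, ← h2, h3]
    have detformula : ∀ u : Fin M → ℂ, (What.updateRow k u).det = δ * (u ⬝ᵥ y) := by
      intro u
      rw [key1, hcy]
      simp only [Pi.smul_apply, smul_eq_mul, dotProduct, Finset.mul_sum]
      exact Finset.sum_congr rfl fun i _ => by ring
    -- Cauchy–Schwarz via the inner product induced by V
    letI core : PreInnerProductSpace.Core ℂ (Fin M → ℂ) :=
      { inner := fun a b => star a ⬝ᵥ V.mulVec b
        conj_inner_symm := fun a b => by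
          change starRingEnd ℂ (star b ⬝ᵥ V.mulVec a) = star a ⬝ᵥ V.mulVec b
          rw [star_dotProduct, starRingEnd_apply, star_star, star_mulVec, dotProduct_mulVec,
            hV.isHermitian.eq]
        re_inner_nonneg := fun a => by
          by_cases h : a = 0
          · simp [h]
          · exact le_of_lt (hV.re_dotProduct_pos h)
        add_left := by simp only [star_add, add_dotProduct, forall_const, implies_true]
        smul_left := fun a b r => by
          change star (r • a) ⬝ᵥ V.mulVec b = starRingEnd ℂ r * (star a ⬝ᵥ V.mulVec b)
          rw [← smul_eq_mul, ← smul_dotProduct, starRingEnd_apply, ← star_smul] }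
    have hCS0 := @InnerProductSpace.Core.inner_mul_inner_self_le ℂ (Fin M → ℂ) _ _ _ core v x
    have hiv : (@inner ℂ _ core.toInner v x) = star v ⬝ᵥ y := rfl
    have hiv' : (@inner ℂ _ core.toInner x v) = star x ⬝ᵥ V.mulVec v := rfl
    have hvv : (@inner ℂ _ core.toInner v v) = star v ⬝ᵥ V.mulVec v := rfl
    have hxx : (@inner ℂ _ core.toInner x x) = star x ⬝ᵥ V.mulVec x := rfl
    set A : ℝ := (star v ⬝ᵥ V.mulVec v).re with hAdef
    set p : ℝ := ‖star v ⬝ᵥ y‖ with hpdef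
    have habs_symm : ‖star x ⬝ᵥ V.mulVec v‖ = p := by
      have := core.conj_inner_symm v x
      change starRingEnd ℂ (star x ⬝ᵥ V.mulVec v) = star v ⬝ᵥ y at this
      rw [hpdef, ← this]
      exact (Complex.norm_conj _).symm
    have hCS : p * p ≤ A * c0 := by
      rw [hiv, hiv', hvv, hxx] at hCS0
      have hn1 : ‖star v ⬝ᵥ y‖ = p := rfl
      have hn2 : ‖star x ⬝ᵥ V.mulVec v‖ = ‖star x ⬝ᵥ V.mulVec v‖ := rfl
      calc p * p = ‖star v ⬝ᵥ y‖ * ‖star x ⬝ᵥ V.mulVec v‖ := by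
            rw [hn1, hn2, habs_symm]
        _ ≤ RCLike.re (star v ⬝ᵥ V.mulVec v) * RCLike.re (star x ⬝ᵥ V.mulVec x) := hCS0
        _ = A * c0 := rfl
    have hdetv : (What.updateRow k (star v)).det = δ * (star v ⬝ᵥ y) := detformula _
    have hp0 : 0 < p := by
      have hdet0 : (What.updateRow k (star v)).det ≠ 0 :=
        ((Matrix.isUnit_iff_isUnit_det _).mp hv).ne_zero
      rw [hdetv] at hdet0
      have hne : star v ⬝ᵥ y ≠ 0 := fun h => hdet0 (by rw [h, mul_zero])
      exact norm_pos_iff.mpr hne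
    have hA0 : 0 < A := by
      by_contra h
      push_neg at h
      have : A * c0 ≤ 0 := mul_nonpos_of_nonpos_of_nonneg h hc0pos.le
      nlinarith
    -- evaluate F w
    have hstarw : star w = (γ : ℂ) • star x := by
      show star ((γ : ℂ) • x) = _
      rw [star_smul]
      simp [Complex.star_def, Complex.conj_ofReal]
    have hdetw : (What.updateRow k (star w)).det = δ * ((γ : ℂ) * (c0 : ℂ)) := by
      rw [detformula, hstarw, smul_dotProduct]
      have h : star x ⬝ᵥ y = (c0 : ℂ) := hc0eq
      rw [h, smul_eq_mul]
    have habsw : ‖(What.updateRow k (star w)).det‖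
        = ‖δ‖ * (γ * c0) := by
      rw [hdetw, norm_mul, norm_mul]
      rw [Complex.norm_of_nonneg hγpos.le, Complex.norm_of_nonneg hc0pos.le]
    have hγc0 : γ * c0 = Real.sqrt c0 := by
      rw [hγ]
      rw [← Real.mul_self_sqrt hc0pos.le]
      field_simp
      rw [Real.sqrt_sq (Real.sqrt_nonneg _)]
    have habsv : ‖(What.updateRow k (star v)).det‖ = ‖δ‖ * p := by
      rw [hdetv, norm_mul, hpdef]
    have hδabs : 0 < ‖δ‖ := norm_pos_iff.mpr hδ0
    have hsqrtpos : 0 < Real.sqrt c0 := Real.sqrt_pos.mpr hc0pos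
    -- final inequality
    have hFw : F w = 1 - 2 * Real.log (‖δ‖ * Real.sqrt c0) := by
      show (star w ⬝ᵥ V.mulVec w).re - 2 * Real.log ‖(What.updateRow k (star w)).det‖
          = 1 - 2 * Real.log (‖δ‖ * Real.sqrt c0)
      rw [part1, habsw, hγc0]
      norm_num
    have hFv : F v = A - 2 * Real.log (‖δ‖ * p) := by
      show (star v ⬝ᵥ V.mulVec v).re - 2 * Real.log ‖(What.updateRow k (star v)).det‖
          = A - 2 * Real.log (‖δ‖ * p)
      rw [habsv, hAdef]
    rw [hFw, hFv]
    rw [Real.log_mul hδabs.ne' hsqrtpos.ne', Real.log_mul hδabs.ne' hp0.ne']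
    have hlogsqrt : Real.log (Real.sqrt c0) = Real.log c0 / 2 := Real.log_sqrt hc0pos.le
    have hlogp : Real.log p + Real.log p ≤ Real.log A + Real.log c0 := by
      have h1 : Real.log (p * p) ≤ Real.log (A * c0) := Real.log_le_log (by positivity) hCS
      rwa [Real.log_mul hp0.ne' hp0.ne', Real.log_mul hA0.ne' hc0pos.ne'] at h1
    have hlogA : Real.log A ≤ A - 1 := Real.log_le_sub_one_of_pos hA0
    linarith
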